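/- Let (C,d) be a bigraded complex over a field k, and let C_1 = H(C, d_0) be the homology of C with respect to the filtration-preserving component d_0 of the differential, regarded as a bigraded k-vector space with the gradings induced by u and f. Then there exists a k-linear differential d̄ on C_1 which strictly decreases the filtration grading and decreases the homological grading by 1 (so that (C_1, d̄) is a bigraded complex whose filtration-degree-0 component vanishes), together with chain maps φ: (C_1, d̄) → (C, d) and ψ: (C, d) → (C_1, d̄) which preserve the homological grading and do not increase the filtration grading, and chain homotopies H: C → C and H': C_1 → C_1 which raise the homological grading by 1 and do not increase the filtration grading, such that ψ∘φ − id = d̄∘H' + H'∘d̄ and φ∘ψ − id = d∘H + H∘d. In other words, (C_1, d̄) is filtered chain homotopy equivalent to (C, d). -/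

import Mathlib

/-!
A bigraded complex over a field `k` is modeled as the vector space `ι → k` on a finite
basis `ι`, with differential `d`, homological grading `u` and filtration grading `f` on
the basis, such that whenever `d (Pi.single i 1) j ≠ 0` we have `u j = u i - 1` and
`f j ≤ f i`.  The map `D0` is the filtration-preserving component of `d`.

`bidegPiece k u f n j` is the subspace spanned by the basis vectors of bidegree `(n, j)`
(homological grading `n`, filtration grading `j`), and `bidegHomology k u f D0 n j` is
the homology of `(C, d₀)` in bidegree `(n, j)`.

STATEMENT: there is a bigraded complex `(C₁, d̄)` whose underlying bigraded vector space
is `H(C, d₀)` (i.e. its basis has, in each bidegree, exactly as many elements as the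
dimension of the `d₀`-homology in that bidegree), whose differential strictly decreases
the filtration grading and decreases the homological grading by 1, together with chain
maps `φ : C₁ → C`, `ψ : C → C₁` preserving the homological grading and not increasing the
filtration grading, and homotopies `H : C → C`, `H' : C₁ → C₁` raising the homological
grading by 1 and not increasing the filtration grading, with `ψ∘φ − id = d̄∘H' + H'∘d̄`
and `φ∘ψ − id = d∘H + H∘d`.  In other words, `(C₁, d̄)` is filtered chain homotopy
equivalent to `(C, d)`.
-/

abbrev bidegPiece (k : Type*) [Field k] {ι : Type*} [Fintype ι] [DecidableEq ι]
    (u f : ι → ℤ) (n j : ℤ) : Submodule k (ι → k) :=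
  Submodule.span k {v : ι → k | ∃ i, u i = n ∧ f i = j ∧ v = Pi.single i 1}

abbrev bidegHomology (k : Type*) [Field k] {ι : Type*} [Fintype ι] [DecidableEq ι]
    (u f : ι → ℤ) (D0 : (ι → k) →ₗ[k] (ι → k)) (n j : ℤ) :=
  ↥(LinearMap.ker D0 ⊓ bidegPiece k u f n j) ⧸
    (Submodule.map D0 (bidegPiece k u f (n + 1) j)).comap
      (LinearMap.ker D0 ⊓ bidegPiece k u f n j).subtype

set_option linter.unusedSectionVars false

open Finset

section helpers

variable {k : Type*} [Field k]

/-- Build a linear map `(α → k) →ₗ (β → k)` from a "matrix" of rows. -/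
noncomputable def mkLin {α β : Type*} [Fintype α] (M : α → β → k) :
    (α → k) →ₗ[k] (β → k) :=
  ∑ i, (LinearMap.proj i : (α → k) →ₗ[k] k).smulRight (M i)

lemma mkLin_apply {α β : Type*} [Fintype α] (M : α → β → k) (v : α → k) :
    mkLin M v = ∑ i, v i • M i := by
  simp [mkLin]

lemma mkLin_single {α β : Type*} [Fintype α] [DecidableEq α] (M : α → β → k) (i : α) :
    mkLin M (Pi.single i 1) = M i := by
  rw [mkLin_apply]
  rw [Finset.sum_eq_single i]
  · simp
  · intro b _ hb; simp [Pi.single_apply, hb]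
  · simp

lemma lin_ext {α : Type*} [Fintype α] [DecidableEq α] {N : Type*} [AddCommGroup N] [Module k N]
    {g g' : (α → k) →ₗ[k] N} (h : ∀ i, g (Pi.single i 1) = g' (Pi.single i 1)) : g = g' := by
  apply (Pi.basisFun k α).ext
  intro i
  simpa [Pi.basisFun_apply] using h i

lemma eq_mkLin {α β : Type*} [Fintype α] [DecidableEq α] (g : (α → k) →ₗ[k] (β → k)) :
    g = mkLin (fun i => g (Pi.single i 1)) :=
  lin_ext fun i => by rw [mkLin_single]

lemma apply_eq_sum {α β : Type*} [Fintype α] [DecidableEq α] (g : (α → k) →ₗ[k] (β → k))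
    (v : α → k) : g v = ∑ i, v i • g (Pi.single i 1) := by
  conv_lhs => rw [eq_mkLin g]
  rw [mkLin_apply]

lemma mkLin_comp {α β γ : Type*} [Fintype α] [Fintype β] [DecidableEq β]
    (M : α → β → k) (M' : β → γ → k) :
    (mkLin M' ∘ₗ mkLin M : (α → k) →ₗ[k] (γ → k)) = mkLin (fun i j => ∑ m, M i m * M' m j) := by
  ext v
  simp only [LinearMap.comp_apply, mkLin_apply]
  simp only [Finset.sum_apply, Pi.smul_apply, smul_eq_mul, Finset.sum_mul, Finset.mul_sum]
  rw [Finset.sum_comm]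
  congr 1; funext m; congr 1; funext i; ring

lemma comp_entry {α β γ : Type*} [Fintype α] [Fintype β] [DecidableEq α] [DecidableEq β]
    (g : (α → k) →ₗ[k] (β → k)) (g' : (β → k) →ₗ[k] (γ → k)) (i : α) (j : γ) :
    (g' ∘ₗ g) (Pi.single i 1) j = ∑ m, g (Pi.single i 1) m * g' (Pi.single m 1) j := by
  conv_lhs => rw [eq_mkLin g, eq_mkLin g', mkLin_comp, mkLin_single]

/-- compositions of maps whose matrix entries respect gradings. -/
lemma comp_grade {α β γ : Type*} [Fintype α] [Fintype β] [DecidableEq α] [DecidableEq β]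
    (uα fα : α → ℤ) (uβ fβ : β → ℤ) (uγ fγ : γ → ℤ) (s t : ℤ)
    (g : (α → k) →ₗ[k] (β → k)) (g' : (β → k) →ₗ[k] (γ → k))
    (hg : ∀ i m, g (Pi.single i 1) m ≠ 0 → uβ m = uα i + s ∧ fβ m ≤ fα i)
    (hg' : ∀ m j, g' (Pi.single m 1) j ≠ 0 → uγ j = uβ m + t ∧ fγ j ≤ fβ m) :
    ∀ i j, (g' ∘ₗ g) (Pi.single i 1) j ≠ 0 → uγ j = uα i + (s + t) ∧ fγ j ≤ fα i := by
  intro i j h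
  rw [comp_entry] at h
  obtain ⟨m, -, hm⟩ := Finset.exists_ne_zero_of_sum_ne_zero h
  have h1 := hg i m (left_ne_zero_of_mul hm)
  have h2 := hg' m j (right_ne_zero_of_mul hm)
  exact ⟨by omega, le_trans h2.2 h1.2⟩

end helpers

section trunc

variable {k : Type*} [Field k]
variable {α β γ : Type*} [Fintype α] [Fintype β] [Fintype γ]
  [DecidableEq α] [DecidableEq β] [DecidableEq γ]

/-- The degree-`s` (in homological grading; degree `0` in filtration) component of a map. -/
noncomputable def trunc (uα fα : α → ℤ) (uβ fβ : β → ℤ) (s : ℤ)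
    (g : (α → k) →ₗ[k] (β → k)) : (α → k) →ₗ[k] (β → k) :=
  mkLin fun i j => if uβ j = uα i + s ∧ fβ j = fα i then g (Pi.single i 1) j else 0

lemma trunc_entry (uα fα : α → ℤ) (uβ fβ : β → ℤ) (s : ℤ) (g : (α → k) →ₗ[k] (β → k))
    (i : α) (j : β) :
    trunc uα fα uβ fβ s g (Pi.single i 1) j =
      if uβ j = uα i + s ∧ fβ j = fα i then g (Pi.single i 1) j else 0 := by
  rw [trunc, mkLin_single]

lemma trunc_grade (uα fα : α → ℤ) (uβ fβ : β → ℤ) (s : ℤ) (g : (α → k) →ₗ[k] (β → k)) :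
    ∀ i j, trunc uα fα uβ fβ s g (Pi.single i 1) j ≠ 0 →
      uβ j = uα i + s ∧ fβ j = fα i := by
  intro i j h
  rw [trunc_entry] at h
  by_contra hc
  rw [if_neg hc] at h
  exact h rfl

lemma trunc_comp (uα fα : α → ℤ) (uβ fβ : β → ℤ) (uγ fγ : γ → ℤ) (s t : ℤ)
    (g : (α → k) →ₗ[k] (β → k)) (g' : (β → k) →ₗ[k] (γ → k))
    (hg : ∀ i m, g (Pi.single i 1) m ≠ 0 → uβ m = uα i + s ∧ fβ m ≤ fα i)
    (hg' : ∀ m j, g' (Pi.single m 1) j ≠ 0 → uγ j = uβ m + t ∧ fγ j ≤ fβ m) :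
    trunc uα fα uγ fγ (s + t) (g' ∘ₗ g) =
      trunc uβ fβ uγ fγ t g' ∘ₗ trunc uα fα uβ fβ s g := by
  apply lin_ext; intro i; funext j
  rw [trunc_entry, comp_entry, comp_entry]
  by_cases hc : uγ j = uα i + (s + t) ∧ fγ j = fα i
  · rw [if_pos hc]
    apply Finset.sum_congr rfl
    intro m _
    rw [trunc_entry, trunc_entry]
    by_cases h1 : g (Pi.single i 1) m = 0
    · rw [h1]; by_cases h2 : uβ m = uα i + s ∧ fβ m = fα i <;> simp [h2]
    by_cases h2 : g' (Pi.single m 1) j = 0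
    · rw [h2]; simp only [mul_zero]
      by_cases h3 : uγ j = uβ m + t ∧ fγ j = fβ m <;> simp [h3]
    have e1 := hg i m h1
    have e2 := hg' m j h2
    have hfm : fβ m = fα i := le_antisymm e1.2 (hc.2 ▸ e2.2)
    rw [if_pos ⟨e1.1, hfm⟩, if_pos ⟨by omega, by omega⟩]
  · rw [if_neg hc]
    symm
    apply Finset.sum_eq_zero
    intro m _
    rw [trunc_entry, trunc_entry]
    by_cases h1 : uβ m = uα i + s ∧ fβ m = fα i
    · by_cases h2 : uγ j = uβ m + t ∧ fγ j = fβ m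
      · exact absurd ⟨by omega, by omega⟩ hc
      · rw [if_neg h2, mul_zero]
    · rw [if_neg h1, zero_mul]

lemma trunc_id (u f : α → ℤ) :
    trunc u f u f 0 (LinearMap.id : (α → k) →ₗ[k] (α → k)) = LinearMap.id := by
  apply lin_ext; intro i; funext j
  rw [trunc_entry]
  by_cases h : j = i
  · subst h; rw [if_pos ⟨by ring, rfl⟩]
  · simp [LinearMap.id_apply, Pi.single_apply, h]

lemma trunc_sub (uα fα : α → ℤ) (uβ fβ : β → ℤ) (s : ℤ) (g g' : (α → k) →ₗ[k] (β → k)) :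
    trunc uα fα uβ fβ s (g - g') = trunc uα fα uβ fβ s g - trunc uα fα uβ fβ s g' := by
  apply lin_ext; intro i; funext j
  simp only [LinearMap.sub_apply, Pi.sub_apply, trunc_entry]
  by_cases h : uβ j = uα i + s ∧ fβ j = fα i <;> simp [h]

lemma trunc_add (uα fα : α → ℤ) (uβ fβ : β → ℤ) (s : ℤ) (g g' : (α → k) →ₗ[k] (β → k)) :
    trunc uα fα uβ fβ s (g + g') = trunc uα fα uβ fβ s g + trunc uα fα uβ fβ s g' := by
  apply lin_ext; intro i; funext j
  simp only [LinearMap.add_apply, Pi.add_apply, trunc_entry]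
  by_cases h : uβ j = uα i + s ∧ fβ j = fα i <;> simp [h]

lemma trunc_eq_zero (uα fα : α → ℤ) (uβ fβ : β → ℤ) (s : ℤ) (g : (α → k) →ₗ[k] (β → k))
    (hstrict : ∀ i j, g (Pi.single i 1) j ≠ 0 → fβ j ≤ fα i - 1) :
    trunc uα fα uβ fβ s g = 0 := by
  apply lin_ext; intro i; funext j
  rw [trunc_entry]
  by_cases h : uβ j = uα i + s ∧ fβ j = fα i
  · rw [if_pos h]
    by_contra hne
    have := hstrict i j (by simpa using hne)
    omega
  · simp [h]

end trunc

section piece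

variable {k : Type*} [Field k] {ι : Type*} [Fintype ι] [DecidableEq ι]

lemma mem_piece_iff (u f : ι → ℤ) (n j : ℤ) (v : ι → k) :
    v ∈ bidegPiece k u f n j ↔ ∀ m, v m ≠ 0 → u m = n ∧ f m = j := by
  constructor
  · intro hv
    let S : Submodule k (ι → k) :=
      { carrier := {w | ∀ m, w m ≠ 0 → u m = n ∧ f m = j}
        add_mem' := by
          intro x y hx hy m hm
          by_cases h1 : x m = 0
          · exact hy m (by simpa [h1] using hm)
          · exact hx m h1
        zero_mem' := by intro m hm; simp at hm
        smul_mem' := by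
          intro c x hx m hm
          exact hx m fun h => hm (by simp [h]) }
    have : bidegPiece k u f n j ≤ S := by
      apply Submodule.span_le.2
      rintro w ⟨i, h1, h2, rfl⟩ m hm
      have : m = i := by
        by_contra hne
        exact hm (Pi.single_eq_of_ne hne 1)
      subst this; exact ⟨h1, h2⟩
    exact this hv
  · intro hv
    have : v = ∑ m, v m • (Pi.single m 1 : ι → k) := by
      funext x
      simp [Pi.single_apply, Finset.sum_ite_eq']
    rw [this]
    apply Submodule.sum_mem
    intro m _
    by_cases hm : v m = 0
    · rw [hm, zero_smul]; exact Submodule.zero_mem _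
    · exact Submodule.smul_mem _ _ (Submodule.subset_span ⟨m, (hv m hm).1, (hv m hm).2, rfl⟩)

lemma finrank_piece (u f : ι → ℤ) (n j : ℤ) :
    Module.finrank k (bidegPiece k u f n j) = Nat.card {i : ι // u i = n ∧ f i = j} := by
  have hset : {v : ι → k | ∃ i, u i = n ∧ f i = j ∧ v = Pi.single i 1} =
      Set.range (fun m : {i : ι // u i = n ∧ f i = j} => Pi.single (m : ι) (1:k)) := by
    ext w
    constructor
    · rintro ⟨i, h1, h2, rfl⟩; exact ⟨⟨i, h1, h2⟩, rfl⟩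
    · rintro ⟨⟨i, h1, h2⟩, rfl⟩; exact ⟨i, h1, h2, rfl⟩
  have hli : LinearIndependent k (fun m : {i : ι // u i = n ∧ f i = j} => (Pi.single (m : ι) 1 : ι → k)) := by
    have := (Pi.basisFun k ι).linearIndependent
    have h2 := this.comp (Subtype.val : {i : ι // u i = n ∧ f i = j} → ι) Subtype.val_injective
    simpa [Function.comp_def, Pi.basisFun_apply] using h2
  rw [show bidegPiece k u f n j = Submodule.span k
      (Set.range (fun m : {i : ι // u i = n ∧ f i = j} => (Pi.single (m : ι) 1 : ι → k))) by
    rw [bidegPiece, hset]]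
  rw [finrank_span_eq_card hli, Nat.card_eq_fintype_card]

/-- A map with bidegree-exact matrix entries (shift `s`) sends pieces to pieces. -/
lemma piece_map {ι' : Type*} [Fintype ι'] [DecidableEq ι'] (u f : ι → ℤ) (u' f' : ι' → ℤ)
    (s : ℤ) (g : (ι → k) →ₗ[k] (ι' → k))
    (hg : ∀ i m, g (Pi.single i 1) m ≠ 0 → u' m = u i + s ∧ f' m = f i)
    (n j : ℤ) (x : ι → k) (hx : x ∈ bidegPiece k u f n j) :
    g x ∈ bidegPiece k u' f' (n + s) j := by
  rw [mem_piece_iff] at hx ⊢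
  intro m hm
  rw [apply_eq_sum] at hm
  simp only [Finset.sum_apply, Pi.smul_apply, smul_eq_mul] at hm
  obtain ⟨i, -, hi⟩ := Finset.exists_ne_zero_of_sum_ne_zero hm
  have h1 := hx i (left_ne_zero_of_mul hi)
  have h2 := hg i m (right_ne_zero_of_mul hi)
  exact ⟨by omega, by omega⟩

end piece

section reduce

universe v w

variable {k : Type v} [Field k]

/-- The statement that `(ι, u, f, d)` admits a filtered reduction to a complex with
strictly filtration-decreasing differential. -/
def ReductionEx {ι : Type w} [Fintype ι] [DecidableEq ι] (u f : ι → ℤ)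
    (d : (ι → k) →ₗ[k] (ι → k)) : Prop :=
  ∃ (ι₁ : Type w) (_ : Fintype ι₁) (_ : DecidableEq ι₁) (u₁ f₁ : ι₁ → ℤ)
    (dbar : (ι₁ → k) →ₗ[k] (ι₁ → k))
    (φ : (ι₁ → k) →ₗ[k] (ι → k)) (ψ : (ι → k) →ₗ[k] (ι₁ → k))
    (H : (ι → k) →ₗ[k] (ι → k)),
    (∀ i j, dbar (Pi.single i 1) j ≠ 0 → u₁ j = u₁ i - 1 ∧ f₁ j ≤ f₁ i - 1) ∧
    dbar ∘ₗ dbar = 0 ∧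
    φ ∘ₗ dbar = d ∘ₗ φ ∧
    ψ ∘ₗ d = dbar ∘ₗ ψ ∧
    (∀ i j, φ (Pi.single i 1) j ≠ 0 → u j = u₁ i ∧ f j ≤ f₁ i) ∧
    (∀ i j, ψ (Pi.single i 1) j ≠ 0 → u₁ j = u i ∧ f₁ j ≤ f i) ∧
    (∀ i j, H (Pi.single i 1) j ≠ 0 → u j = u i + 1 ∧ f j ≤ f i) ∧
    ψ ∘ₗ φ = LinearMap.id ∧
    φ ∘ₗ ψ - LinearMap.id = d ∘ₗ H + H ∘ₗ d

lemma reduce_base {ι : Type w} [Fintype ι] [DecidableEq ι] (u f : ι → ℤ)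
    (d : (ι → k) →ₗ[k] (ι → k))
    (hgrade : ∀ i j, d (Pi.single i 1) j ≠ 0 → u j = u i - 1 ∧ f j ≤ f i)
    (hd2 : d ∘ₗ d = 0)
    (hnone : ∀ i j, f j = f i → d (Pi.single i 1) j = 0) :
    ReductionEx u f d := by
  refine ⟨ι, inferInstance, inferInstance, u, f, d, LinearMap.id, LinearMap.id, 0,
    ?_, hd2, by simp, by simp, ?_, ?_, by simp, by simp, by simp⟩
  · intro i j h
    refine ⟨(hgrade i j h).1, ?_⟩
    have h2 := (hgrade i j h).2
    have h3 : f j ≠ f i := fun he => h (hnone i j he)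
    omega
  · intro i j h
    have : j = i := by
      by_contra hc
      exact h (by simp [LinearMap.id_apply, Pi.single_eq_of_ne hc])
    subst this; exact ⟨rfl, le_rfl⟩
  · intro i j h
    have : j = i := by
      by_contra hc
      exact h (by simp [LinearMap.id_apply, Pi.single_eq_of_ne hc])
    subst this; exact ⟨rfl, le_rfl⟩

end reduce

section gauss

variable {k : Type v} [Field k] {ι : Type w} [Fintype ι] [DecidableEq ι]

/-- Index set with two basis elements removed. -/
abbrev Sub2 (i₀ j₀ : ι) : Type w := {m : ι // m ≠ i₀ ∧ m ≠ j₀}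

/-- Differential of the reduced complex. -/
def MdM (a : ι → ι → k) (i₀ j₀ : ι) (i j : Sub2 i₀ j₀) : k :=
  a ↑i ↑j - a ↑i j₀ * (a i₀ j₀)⁻¹ * a i₀ ↑j

def MphiM (a : ι → ι → k) (i₀ j₀ : ι) (i : Sub2 i₀ j₀) (j : ι) : k :=
  (if j = ↑i then 1 else 0) - (a i₀ j₀)⁻¹ * a ↑i j₀ * (if j = i₀ then 1 else 0)

def MpsiM (a : ι → ι → k) (i₀ j₀ : ι) (m : ι) (n : Sub2 i₀ j₀) : k :=
  if m = j₀ then -((a i₀ j₀)⁻¹ * a i₀ ↑n) else if m = ↑n then 1 else 0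

def MHM (a : ι → ι → k) (i₀ j₀ : ι) (i j : ι) : k :=
  if i = j₀ ∧ j = i₀ then -(a i₀ j₀)⁻¹ else 0

variable (u f : ι → ℤ) (a : ι → ι → k) (i₀ j₀ : ι)

lemma sum_split (hne : i₀ ≠ j₀) (F : ι → k) :
    ∑ m, F m = (∑ m : Sub2 i₀ j₀, F ↑m) + (F i₀ + F j₀) := by
  classical
  rw [← Finset.sum_filter_add_sum_filter_not Finset.univ (fun m => m ≠ i₀ ∧ m ≠ j₀) F]
  congr 1
  · rw [← Finset.sum_subtype (Finset.univ.filter (fun m => m ≠ i₀ ∧ m ≠ j₀))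
      (by intro m; simp) F]
  · rw [show Finset.univ.filter (fun m => ¬(m ≠ i₀ ∧ m ≠ j₀)) = {i₀, j₀} by
      ext m; simp [not_and_or, not_not, or_comm]; tauto]
    exact Finset.sum_pair hne

section withhyp

variable {u f : ι → ℤ} {a : ι → ι → k} {i₀ j₀ : ι}

lemma hne_gauss (hgrade_a : ∀ i j, a i j ≠ 0 → u j = u i - 1 ∧ f j ≤ f i)
    (hx : a i₀ j₀ ≠ 0) : i₀ ≠ j₀ := by
  intro h
  have := (hgrade_a i₀ j₀ hx).1
  rw [h] at this
  omega

lemma a_ii (hgrade_a : ∀ i j, a i j ≠ 0 → u j = u i - 1 ∧ f j ≤ f i) : a i₀ i₀ = 0 := by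
  by_contra h
  have := (hgrade_a i₀ i₀ h).1
  omega

lemma a_jj (hgrade_a : ∀ i j, a i j ≠ 0 → u j = u i - 1 ∧ f j ≤ f i) : a j₀ j₀ = 0 := by
  by_contra h
  have := (hgrade_a j₀ j₀ h).1
  omega

lemma L1 (hgrade_a : ∀ i j, a i j ≠ 0 → u j = u i - 1 ∧ f j ≤ f i)
    (hd2a : ∀ i j, ∑ m, a i m * a m j = 0) (hx : a i₀ j₀ ≠ 0) (i : ι) :
    (∑ m : Sub2 i₀ j₀, a i ↑m * a ↑m j₀) = -(a i i₀ * a i₀ j₀) := by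
  have h := hd2a i j₀
  rw [sum_split i₀ j₀ (hne_gauss hgrade_a hx)] at h
  rw [a_jj hgrade_a] at h
  linear_combination h

lemma L2 (hgrade_a : ∀ i j, a i j ≠ 0 → u j = u i - 1 ∧ f j ≤ f i)
    (hd2a : ∀ i j, ∑ m, a i m * a m j = 0) (hx : a i₀ j₀ ≠ 0) (n : ι) :
    (∑ m : Sub2 i₀ j₀, a i₀ ↑m * a ↑m n) = -(a i₀ j₀ * a j₀ n) := by
  have h := hd2a i₀ n
  rw [sum_split i₀ j₀ (hne_gauss hgrade_a hx)] at h
  rw [a_ii hgrade_a] at h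
  linear_combination h

lemma L3 (hgrade_a : ∀ i j, a i j ≠ 0 → u j = u i - 1 ∧ f j ≤ f i)
    (hd2a : ∀ i j, ∑ m, a i m * a m j = 0) (hx : a i₀ j₀ ≠ 0) :
    (∑ m : Sub2 i₀ j₀, a i₀ ↑m * a ↑m j₀) = 0 := by
  rw [L2 hgrade_a hd2a hx j₀, a_jj hgrade_a, mul_zero, neg_zero]

end withhyp

end gauss

section gauss2

variable {k : Type v} [Field k] {ι : Type w} [Fintype ι] [DecidableEq ι]
variable {u f : ι → ℤ} {a : ι → ι → k} {i₀ j₀ : ι}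

lemma mkLin_sub {α β : Type*} [Fintype α] [DecidableEq α] (M M' : α → β → k) :
    mkLin M - mkLin M' = mkLin (fun i j => M i j - M' i j) := by
  apply lin_ext; intro i; funext j
  simp [mkLin_single]

lemma mkLin_add {α β : Type*} [Fintype α] [DecidableEq α] (M M' : α → β → k) :
    mkLin M + mkLin M' = mkLin (fun i j => M i j + M' i j) := by
  apply lin_ext; intro i; funext j
  simp [mkLin_single]

lemma id_eq_mkLin {α : Type*} [Fintype α] [DecidableEq α] :
    (LinearMap.id : (α → k) →ₗ[k] (α → k)) = mkLin (fun i => Pi.single i 1) := by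
  apply lin_ext; intro i
  rw [mkLin_single]; rfl

lemma gauss_psi_d (hgrade_a : ∀ i j, a i j ≠ 0 → u j = u i - 1 ∧ f j ≤ f i)
    (hd2a : ∀ i j, ∑ m, a i m * a m j = 0) (hx : a i₀ j₀ ≠ 0) :
    mkLin (MpsiM a i₀ j₀) ∘ₗ mkLin a = mkLin (MdM a i₀ j₀) ∘ₗ mkLin (MpsiM a i₀ j₀) := by
  have hne : i₀ ≠ j₀ := hne_gauss hgrade_a hx
  rw [mkLin_comp, mkLin_comp]
  congr 1
  funext i n
  have hL : (∑ m : ι, a i m * MpsiM a i₀ j₀ m n)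
      = a i ↑n - a i j₀ * ((a i₀ j₀)⁻¹ * a i₀ ↑n) := by
    rw [sum_split i₀ j₀ hne]
    have h1 : ∀ m : Sub2 i₀ j₀, m ≠ n → a i ↑m * MpsiM a i₀ j₀ ↑m n = 0 := by
      intro m hm
      have hmn : (↑m : ι) ≠ ↑n := fun h => hm (Subtype.ext h)
      simp [MpsiM, m.2.2, hmn]
    rw [Fintype.sum_eq_single n h1]
    have h2 : MpsiM a i₀ j₀ i₀ n = 0 := by simp [MpsiM, hne, (Ne.symm n.2.1)]
    have h3 : MpsiM a i₀ j₀ j₀ n = -((a i₀ j₀)⁻¹ * a i₀ ↑n) := by simp [MpsiM]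
    have h4 : MpsiM a i₀ j₀ ↑n n = 1 := by simp [MpsiM, n.2.2]
    rw [h2, h3, h4]; ring
  rw [hL]
  by_cases hii : i = i₀
  · rw [hii]
    rw [Finset.sum_eq_zero (fun m _ => ?_)]
    · field_simp; ring
    · have hz : MpsiM a i₀ j₀ i₀ m = 0 := by simp [MpsiM, hne, (Ne.symm m.2.1)]
      rw [hz, zero_mul]
  by_cases hij : i = j₀
  · rw [hij]
    have hr : ∀ m : Sub2 i₀ j₀, MpsiM a i₀ j₀ j₀ m * MdM a i₀ j₀ m n
        = (-(a i₀ j₀)⁻¹) * (a i₀ ↑m * a ↑m ↑n)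
          + ((a i₀ j₀)⁻¹ * ((a i₀ j₀)⁻¹ * a i₀ ↑n)) * (a i₀ ↑m * a ↑m j₀) := by
      intro m
      simp only [MpsiM, MdM, if_pos rfl, if_true]
      ring
    rw [Finset.sum_congr rfl (fun m _ => hr m), Finset.sum_add_distrib,
      ← Finset.mul_sum, ← Finset.mul_sum, L2 hgrade_a hd2a hx ↑n, L3 hgrade_a hd2a hx,
      a_jj hgrade_a]
    field_simp; ring
  · have hmem : i ≠ i₀ ∧ i ≠ j₀ := ⟨hii, hij⟩
    have h1 : ∀ m : Sub2 i₀ j₀, m ≠ ⟨i, hmem⟩ →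
        MpsiM a i₀ j₀ i m * MdM a i₀ j₀ m n = 0 := by
      intro m hm
      have : i ≠ ↑m := fun h => hm (Subtype.ext h.symm)
      simp [MpsiM, hij, this]
    rw [Fintype.sum_eq_single ⟨i, hmem⟩ h1]
    have h2 : MpsiM a i₀ j₀ i ⟨i, hmem⟩ = 1 := by simp [MpsiM, hij]
    rw [h2, one_mul]
    simp only [MdM]; ring

lemma gauss_phi_d (hgrade_a : ∀ i j, a i j ≠ 0 → u j = u i - 1 ∧ f j ≤ f i)
    (hd2a : ∀ i j, ∑ m, a i m * a m j = 0) (hx : a i₀ j₀ ≠ 0) :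
    mkLin (MphiM a i₀ j₀) ∘ₗ mkLin (MdM a i₀ j₀) = mkLin a ∘ₗ mkLin (MphiM a i₀ j₀) := by
  have hne : i₀ ≠ j₀ := hne_gauss hgrade_a hx
  rw [mkLin_comp, mkLin_comp]
  congr 1
  funext i n
  have hR : (∑ m : ι, MphiM a i₀ j₀ i m * a m n)
      = a ↑i n - (a i₀ j₀)⁻¹ * a ↑i j₀ * a i₀ n := by
    rw [sum_split i₀ j₀ hne]
    have h1 : ∀ m : Sub2 i₀ j₀, m ≠ i → MphiM a i₀ j₀ i ↑m * a ↑m n = 0 := by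
      intro m hm
      have hmn : (↑m : ι) ≠ ↑i := fun h => hm (Subtype.ext h)
      simp [MphiM, m.2.1, hmn]
    rw [Fintype.sum_eq_single i h1]
    have h2 : MphiM a i₀ j₀ i ↑i = 1 := by simp [MphiM, i.2.1]
    have h3 : MphiM a i₀ j₀ i i₀ = -((a i₀ j₀)⁻¹ * a ↑i j₀) := by
      simp [MphiM, (Ne.symm i.2.1)]
    have h4 : MphiM a i₀ j₀ i j₀ = 0 := by
      simp [MphiM, (Ne.symm i.2.2), (Ne.symm hne)]
    rw [h2, h3, h4]; ring
  rw [hR]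
  by_cases hni : n = i₀
  · rw [hni]
    have hr : ∀ m : Sub2 i₀ j₀, MdM a i₀ j₀ i m * MphiM a i₀ j₀ m i₀
        = (-(a i₀ j₀)⁻¹) * (a ↑i ↑m * a ↑m j₀)
          + ((a i₀ j₀)⁻¹ * (a ↑i j₀ * (a i₀ j₀)⁻¹)) * (a i₀ ↑m * a ↑m j₀) := by
      intro m
      simp only [MdM, MphiM, if_pos rfl, if_neg (Ne.symm m.2.1), if_true]
      ring
    rw [Finset.sum_congr rfl (fun m _ => hr m), Finset.sum_add_distrib,
      ← Finset.mul_sum, ← Finset.mul_sum, L1 hgrade_a hd2a hx ↑i, L3 hgrade_a hd2a hx,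
      a_ii hgrade_a]
    field_simp; ring
  by_cases hnj : n = j₀
  · rw [hnj]
    rw [Finset.sum_eq_zero (fun m _ => ?_)]
    · field_simp; ring
    · have hz : MphiM a i₀ j₀ m j₀ = 0 := by
        simp [MphiM, (Ne.symm m.2.2), (Ne.symm hne)]
      rw [hz, mul_zero]
  · have hmem : n ≠ i₀ ∧ n ≠ j₀ := ⟨hni, hnj⟩
    have h1 : ∀ m : Sub2 i₀ j₀, m ≠ ⟨n, hmem⟩ →
        MdM a i₀ j₀ i m * MphiM a i₀ j₀ m n = 0 := by
      intro m hm
      have : n ≠ ↑m := fun h => hm (Subtype.ext h.symm)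
      simp [MphiM, hni, this]
    rw [Fintype.sum_eq_single ⟨n, hmem⟩ h1]
    have h2 : MphiM a i₀ j₀ ⟨n, hmem⟩ n = 1 := by simp [MphiM, hni]
    rw [h2, mul_one]
    simp only [MdM]; ring

lemma gauss_psi_phi (hgrade_a : ∀ i j, a i j ≠ 0 → u j = u i - 1 ∧ f j ≤ f i)
    (hx : a i₀ j₀ ≠ 0) :
    mkLin (MpsiM a i₀ j₀) ∘ₗ mkLin (MphiM a i₀ j₀) = LinearMap.id := by
  have hne : i₀ ≠ j₀ := hne_gauss hgrade_a hx
  rw [mkLin_comp, id_eq_mkLin]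
  congr 1
  funext i n
  rw [sum_split i₀ j₀ hne]
  have h2 : MpsiM a i₀ j₀ i₀ n = 0 := by simp [MpsiM, hne, (Ne.symm n.2.1)]
  have h4 : MphiM a i₀ j₀ i j₀ = 0 := by
    simp [MphiM, (Ne.symm i.2.2), (Ne.symm hne)]
  rw [h2, h4, mul_zero, zero_mul, add_zero, add_zero]
  have h1 : ∀ m : Sub2 i₀ j₀, m ≠ i →
      MphiM a i₀ j₀ i ↑m * MpsiM a i₀ j₀ ↑m n = 0 := by
    intro m hm
    have hmn : (↑m : ι) ≠ ↑i := fun h => hm (Subtype.ext h)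
    simp [MphiM, m.2.1, hmn]
  rw [Fintype.sum_eq_single i h1]
  have h5 : MphiM a i₀ j₀ i ↑i = 1 := by simp [MphiM, i.2.1]
  rw [h5, one_mul]
  by_cases h : n = i
  · rw [h]; simp [MpsiM, i.2.2, Pi.single_apply]
  · have : (↑i:ι) ≠ ↑n := fun hh => h (Subtype.ext hh.symm)
    simp [MpsiM, i.2.2, this, Pi.single_apply, h]

lemma gauss_homotopy (hgrade_a : ∀ i j, a i j ≠ 0 → u j = u i - 1 ∧ f j ≤ f i)
    (hd2a : ∀ i j, ∑ m, a i m * a m j = 0) (hx : a i₀ j₀ ≠ 0) :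
    mkLin (MphiM a i₀ j₀) ∘ₗ mkLin (MpsiM a i₀ j₀) - LinearMap.id
      = mkLin a ∘ₗ mkLin (MHM a i₀ j₀) + mkLin (MHM a i₀ j₀) ∘ₗ mkLin a := by
  have hne : i₀ ≠ j₀ := hne_gauss hgrade_a hx
  rw [mkLin_comp, mkLin_comp, mkLin_comp, id_eq_mkLin, mkLin_sub, mkLin_add]
  congr 1
  funext i n
  have hRHS1 : (∑ m : ι, MHM a i₀ j₀ i m * a m n)
      = if i = j₀ then -(a i₀ j₀)⁻¹ * a i₀ n else 0 := by
    by_cases hij : i = j₀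
    · rw [hij]
      simp only [MHM, if_pos rfl, true_and, if_true]
      rw [Fintype.sum_eq_single i₀ (fun m hm => by rw [if_neg hm, zero_mul])]
      rw [if_pos rfl]
    · rw [if_neg hij]
      apply Finset.sum_eq_zero
      intro m _
      rw [MHM, if_neg (fun hc => hij hc.1), zero_mul]
  have hRHS2 : (∑ m : ι, a i m * MHM a i₀ j₀ m n)
      = if n = i₀ then a i j₀ * -(a i₀ j₀)⁻¹ else 0 := by
    by_cases hni : n = i₀
    · rw [hni]
      rw [if_pos rfl]
      rw [Fintype.sum_eq_single j₀ (fun m hm => by rw [MHM, if_neg (fun hc => hm hc.1), mul_zero])]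
      rw [MHM, if_pos ⟨rfl, rfl⟩]
    · rw [if_neg hni]
      apply Finset.sum_eq_zero
      intro m _
      rw [MHM, if_neg (fun hc => hni hc.2), mul_zero]
  rw [hRHS1, hRHS2]
  by_cases hii : i = i₀
  · rw [hii]
    rw [Finset.sum_eq_zero (fun m _ => ?_)]
    · rw [if_neg hne, Pi.single_apply]
      by_cases hn : n = i₀
      · rw [hn]; rw [if_pos rfl, if_pos rfl]; field_simp; ring
      · rw [if_neg hn, if_neg hn]; simp
    · have hz : MpsiM a i₀ j₀ i₀ m = 0 := by simp [MpsiM, hne, (Ne.symm m.2.1)]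
      rw [hz, zero_mul]
  by_cases hij : i = j₀
  · rw [hij]
    rw [if_pos rfl]
    by_cases hni : n = i₀
    · rw [hni]
      have hr : ∀ m : Sub2 i₀ j₀, MpsiM a i₀ j₀ j₀ m * MphiM a i₀ j₀ m i₀
          = ((a i₀ j₀)⁻¹ * (a i₀ j₀)⁻¹) * (a i₀ ↑m * a ↑m j₀) := by
        intro m
        simp only [MpsiM, MphiM, if_pos rfl, if_neg (Ne.symm m.2.1), if_true]
        ring
      rw [Finset.sum_congr rfl (fun m _ => hr m), ← Finset.mul_sum,
        L3 hgrade_a hd2a hx, mul_zero, if_pos rfl, Pi.single_apply, if_neg hne,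
        a_ii hgrade_a, a_jj hgrade_a]
      simp
    · rw [if_neg hni, add_zero, Pi.single_apply]
      by_cases hnj : n = j₀
      · rw [hnj]
        rw [Finset.sum_eq_zero (fun m _ => ?_)]
        · rw [if_pos rfl]; field_simp; ring
        · have hz : MphiM a i₀ j₀ m j₀ = 0 := by
            simp [MphiM, (Ne.symm m.2.2), (Ne.symm hne)]
          rw [hz, mul_zero]
      · have hmem : n ≠ i₀ ∧ n ≠ j₀ := ⟨hni, hnj⟩
        have h1 : ∀ m : Sub2 i₀ j₀, m ≠ ⟨n, hmem⟩ →
            MpsiM a i₀ j₀ j₀ m * MphiM a i₀ j₀ m n = 0 := by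
          intro m hm
          have : n ≠ ↑m := fun h => hm (Subtype.ext h.symm)
          simp [MphiM, hni, this]
        rw [Fintype.sum_eq_single ⟨n, hmem⟩ h1]
        have h2 : MphiM a i₀ j₀ ⟨n, hmem⟩ n = 1 := by simp [MphiM, hni]
        have h3 : MpsiM a i₀ j₀ j₀ ⟨n, hmem⟩ = -((a i₀ j₀)⁻¹ * a i₀ n) := by
          simp [MpsiM]
        rw [h2, h3, mul_one, if_neg hnj]
        ring
  · have hmem : i ≠ i₀ ∧ i ≠ j₀ := ⟨hii, hij⟩
    rw [if_neg hij, zero_add]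
    have h1 : ∀ m : Sub2 i₀ j₀, m ≠ ⟨i, hmem⟩ →
        MpsiM a i₀ j₀ i m * MphiM a i₀ j₀ m n = 0 := by
      intro m hm
      have : i ≠ ↑m := fun h => hm (Subtype.ext h.symm)
      simp [MpsiM, hij, this]
    rw [Fintype.sum_eq_single ⟨i, hmem⟩ h1]
    have h2 : MpsiM a i₀ j₀ i ⟨i, hmem⟩ = 1 := by simp [MpsiM, hij]
    rw [h2, one_mul]
    simp only [MphiM, Pi.single_apply]
    by_cases hn : n = i₀
    · rw [hn]
      rw [if_pos rfl, if_neg (Ne.symm hii), if_pos rfl]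
      ring
    · rw [if_neg hn, if_neg hn]
      by_cases hni2 : n = i
      · rw [hni2]; simp
      · rw [if_neg hni2]; ring

end gauss2

section gauss3

variable {k : Type v} [Field k] {ι : Type w} [Fintype ι] [DecidableEq ι]
variable {u f : ι → ℤ} {a : ι → ι → k} {i₀ j₀ : ι}

lemma gauss_d2 (hgrade_a : ∀ i j, a i j ≠ 0 → u j = u i - 1 ∧ f j ≤ f i)
    (hd2a : ∀ i j, ∑ m, a i m * a m j = 0) (hx : a i₀ j₀ ≠ 0) :
    mkLin (MdM a i₀ j₀) ∘ₗ mkLin (MdM a i₀ j₀) = 0 := by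
  have hAA : mkLin a ∘ₗ mkLin a = (0 : (ι → k) →ₗ[k] (ι → k)) := by
    rw [mkLin_comp]
    apply lin_ext
    intro i
    rw [mkLin_single]
    funext j
    simpa using hd2a i j
  calc mkLin (MdM a i₀ j₀) ∘ₗ mkLin (MdM a i₀ j₀)
      = mkLin (MdM a i₀ j₀) ∘ₗ (LinearMap.id ∘ₗ mkLin (MdM a i₀ j₀)) := by
        rw [LinearMap.id_comp]
    _ = mkLin (MdM a i₀ j₀) ∘ₗ ((mkLin (MpsiM a i₀ j₀) ∘ₗ mkLin (MphiM a i₀ j₀)) ∘ₗ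
          mkLin (MdM a i₀ j₀)) := by rw [gauss_psi_phi hgrade_a hx]
    _ = (mkLin (MdM a i₀ j₀) ∘ₗ mkLin (MpsiM a i₀ j₀)) ∘ₗ
          (mkLin (MphiM a i₀ j₀) ∘ₗ mkLin (MdM a i₀ j₀)) := by
        rw [LinearMap.comp_assoc, LinearMap.comp_assoc]
    _ = (mkLin (MpsiM a i₀ j₀) ∘ₗ mkLin a) ∘ₗ (mkLin a ∘ₗ mkLin (MphiM a i₀ j₀)) := by
        rw [gauss_psi_d hgrade_a hd2a hx, gauss_phi_d hgrade_a hd2a hx]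
    _ = mkLin (MpsiM a i₀ j₀) ∘ₗ ((mkLin a ∘ₗ mkLin a) ∘ₗ mkLin (MphiM a i₀ j₀)) := by
        rw [LinearMap.comp_assoc, LinearMap.comp_assoc]
    _ = 0 := by rw [hAA]; simp

lemma gauss_grade_d (hgrade_a : ∀ i j, a i j ≠ 0 → u j = u i - 1 ∧ f j ≤ f i)
    (hf0 : f j₀ = f i₀) (hx : a i₀ j₀ ≠ 0) :
    ∀ i j : Sub2 i₀ j₀, MdM a i₀ j₀ i j ≠ 0 →
      u ↑j = u ↑i - 1 ∧ f ↑j ≤ f ↑i := by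
  intro i j h
  by_cases e1 : a ↑i ↑j = 0
  · have h2 : a ↑i j₀ * (a i₀ j₀)⁻¹ * a i₀ ↑j ≠ 0 := by
      simp only [MdM, e1, zero_sub, neg_ne_zero] at h
      exact h
    have e2 : a ↑i j₀ ≠ 0 := fun hz => h2 (by simp [hz])
    have e3 : a i₀ ↑j ≠ 0 := fun hz => h2 (by simp [hz])
    have g2 := hgrade_a _ _ e2
    have g3 := hgrade_a _ _ e3
    have g0 := hgrade_a i₀ j₀ hx
    exact ⟨by omega, by omega⟩
  · exact hgrade_a _ _ e1

lemma gauss_grade_phi (hgrade_a : ∀ i j, a i j ≠ 0 → u j = u i - 1 ∧ f j ≤ f i)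
    (hf0 : f j₀ = f i₀) (hx : a i₀ j₀ ≠ 0) :
    ∀ (i : Sub2 i₀ j₀) (j : ι), MphiM a i₀ j₀ i j ≠ 0 → u j = u ↑i ∧ f j ≤ f ↑i := by
  intro i j h
  by_cases hji : j = ↑i
  · rw [hji]; exact ⟨rfl, le_rfl⟩
  · have hji₀ : j = i₀ := by
      by_contra hc
      exact h (by simp [MphiM, hji, hc])
    rw [hji₀]
    have e2 : a ↑i j₀ ≠ 0 := by
      intro hz
      exact h (by simp [MphiM, hji, hz])
    have g2 := hgrade_a _ _ e2
    have g0 := hgrade_a i₀ j₀ hx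
    exact ⟨by omega, by omega⟩

lemma gauss_grade_psi (hgrade_a : ∀ i j, a i j ≠ 0 → u j = u i - 1 ∧ f j ≤ f i)
    (hf0 : f j₀ = f i₀) (hx : a i₀ j₀ ≠ 0) :
    ∀ (m : ι) (n : Sub2 i₀ j₀), MpsiM a i₀ j₀ m n ≠ 0 → u ↑n = u m ∧ f ↑n ≤ f m := by
  intro m n h
  by_cases hmj : m = j₀
  · rw [hmj]
    have e2 : a i₀ ↑n ≠ 0 := by
      intro hz
      exact h (by simp [MpsiM, hmj, hz])
    have g2 := hgrade_a _ _ e2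
    have g0 := hgrade_a i₀ j₀ hx
    exact ⟨by omega, by omega⟩
  · have hmn : m = ↑n := by
      by_contra hc
      exact h (by simp [MpsiM, hmj, hc])
    rw [hmn]; exact ⟨rfl, le_rfl⟩

lemma gauss_grade_H (hgrade_a : ∀ i j, a i j ≠ 0 → u j = u i - 1 ∧ f j ≤ f i)
    (hf0 : f j₀ = f i₀) (hx : a i₀ j₀ ≠ 0) :
    ∀ (i j : ι), MHM a i₀ j₀ i j ≠ 0 → u j = u i + 1 ∧ f j ≤ f i := by
  intro i j h
  have hc : i = j₀ ∧ j = i₀ := by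
    by_contra hc
    exact h (by simp [MHM, hc])
  obtain ⟨h1, h2⟩ := hc
  rw [h1, h2]
  have g0 := hgrade_a i₀ j₀ hx
  exact ⟨by omega, by omega⟩

end gauss3

section compred

variable {k : Type v} [Field k]
variable {V₁ V₂ V₃ : Type*} [AddCommGroup V₁] [Module k V₁] [AddCommGroup V₂] [Module k V₂]
  [AddCommGroup V₃] [Module k V₃]

lemma comp_reduction_homotopy
    (d1 : V₁ →ₗ[k] V₁) (d2 : V₂ →ₗ[k] V₂)
    (X : V₂ →ₗ[k] V₁) (Y : V₁ →ₗ[k] V₂) (h1 : V₁ →ₗ[k] V₁)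
    (Φ : V₃ →ₗ[k] V₂) (Ψ : V₂ →ₗ[k] V₃) (h2 : V₂ →ₗ[k] V₂)
    (hXd : X ∘ₗ d2 = d1 ∘ₗ X) (hYd : Y ∘ₗ d1 = d2 ∘ₗ Y)
    (hXY : X ∘ₗ Y - LinearMap.id = d1 ∘ₗ h1 + h1 ∘ₗ d1)
    (hΦΨ : Φ ∘ₗ Ψ - LinearMap.id = d2 ∘ₗ h2 + h2 ∘ₗ d2) :
    (X ∘ₗ Φ) ∘ₗ (Ψ ∘ₗ Y) - LinearMap.id
      = d1 ∘ₗ (h1 + X ∘ₗ h2 ∘ₗ Y) + (h1 + X ∘ₗ h2 ∘ₗ Y) ∘ₗ d1 := by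
  have e1 : Φ ∘ₗ Ψ = d2 ∘ₗ h2 + h2 ∘ₗ d2 + LinearMap.id := sub_eq_iff_eq_add.mp hΦΨ
  have e2 : X ∘ₗ Y = d1 ∘ₗ h1 + h1 ∘ₗ d1 + LinearMap.id := sub_eq_iff_eq_add.mp hXY
  have key : (X ∘ₗ Φ) ∘ₗ (Ψ ∘ₗ Y)
      = d1 ∘ₗ (X ∘ₗ (h2 ∘ₗ Y)) + (X ∘ₗ (h2 ∘ₗ Y)) ∘ₗ d1
        + (d1 ∘ₗ h1 + h1 ∘ₗ d1 + LinearMap.id) := by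
    calc (X ∘ₗ Φ) ∘ₗ (Ψ ∘ₗ Y) = X ∘ₗ ((Φ ∘ₗ Ψ) ∘ₗ Y) := by
          rw [LinearMap.comp_assoc, LinearMap.comp_assoc]
      _ = X ∘ₗ ((d2 ∘ₗ h2 + h2 ∘ₗ d2 + LinearMap.id) ∘ₗ Y) := by rw [e1]
      _ = (X ∘ₗ d2) ∘ₗ (h2 ∘ₗ Y) + X ∘ₗ (h2 ∘ₗ (d2 ∘ₗ Y)) + X ∘ₗ Y := by
          simp only [LinearMap.add_comp, LinearMap.comp_add, LinearMap.id_comp,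
            LinearMap.comp_assoc]
      _ = (d1 ∘ₗ X) ∘ₗ (h2 ∘ₗ Y) + X ∘ₗ (h2 ∘ₗ (Y ∘ₗ d1)) + X ∘ₗ Y := by
          rw [hXd, ← hYd]
      _ = d1 ∘ₗ (X ∘ₗ (h2 ∘ₗ Y)) + (X ∘ₗ (h2 ∘ₗ Y)) ∘ₗ d1
            + (d1 ∘ₗ h1 + h1 ∘ₗ d1 + LinearMap.id) := by
          rw [e2]
          simp only [LinearMap.comp_assoc]
  rw [sub_eq_iff_eq_add, key]
  simp only [LinearMap.comp_add, LinearMap.add_comp, LinearMap.comp_assoc]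
  abel

end compred

section reducemain

variable {k : Type v} [Field k]

theorem reduce (N : ℕ) :
    ∀ (ι : Type w) [Fintype ι] [DecidableEq ι] (u f : ι → ℤ)
      (d : (ι → k) →ₗ[k] (ι → k)), Fintype.card ι ≤ N →
      (∀ i j, d (Pi.single i 1) j ≠ 0 → u j = u i - 1 ∧ f j ≤ f i) →
      d ∘ₗ d = 0 → ReductionEx u f d := by
  induction N with
  | zero =>
    intro ι _ _ u f d hcard hgrade hd2
    have hempty : IsEmpty ι := Fintype.card_eq_zero_iff.mp (Nat.le_zero.mp hcard)
    exact reduce_base u f d hgrade hd2 (fun i j _ => (hempty.elim i))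
  | succ N IH =>
    intro ι _ _ u f d hcard hgrade hd2
    by_cases hex : ∃ p : ι × ι, f p.2 = f p.1 ∧ d (Pi.single p.1 1) p.2 ≠ 0
    case neg =>
      push_neg at hex
      exact reduce_base u f d hgrade hd2 (fun i j hf => hex (i, j) hf)
    case pos =>
    obtain ⟨⟨i₀, j₀⟩, hf0, hx0⟩ := hex
    obtain ⟨A, hA⟩ : ∃ A : ι → ι → k, A = fun i j => d (Pi.single i 1) j := ⟨_, rfl⟩
    have hda : d = mkLin A := by rw [hA]; exact eq_mkLin d
    have hgrade_a : ∀ i j, A i j ≠ 0 → u j = u i - 1 ∧ f j ≤ f i := by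
      rw [hA]; exact hgrade
    have hd2a : ∀ i j, ∑ m, A i m * A m j = 0 := by
      rw [hA]
      intro i j
      have h := comp_entry (k := k) d d i j
      rw [hd2] at h
      simpa using h.symm
    have hx0' : A i₀ j₀ ≠ 0 := by rw [hA]; exact hx0
    have hcard' : Fintype.card (Sub2 i₀ j₀) ≤ N := by
      have h1 : Fintype.card (Sub2 i₀ j₀) < Fintype.card ι :=
        Fintype.card_subtype_lt (x := i₀) (by simp)
      omega
    obtain ⟨ι₁, iFin, iDec, u₁, f₁, dbar, Φ, Ψ, H₁, hb1, hb2, hb3, hb4, hb5, hb6, hb7,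
        hb8, hb9⟩ :=
      IH (Sub2 i₀ j₀) (fun m => u ↑m) (fun m => f ↑m) (mkLin (MdM A i₀ j₀)) hcard'
        (fun i j h => gauss_grade_d hgrade_a hf0 hx0' i j (by rwa [mkLin_single] at h))
        (gauss_d2 hgrade_a hd2a hx0')
    refine ⟨ι₁, iFin, iDec, u₁, f₁, dbar,
      mkLin (MphiM A i₀ j₀) ∘ₗ Φ, Ψ ∘ₗ mkLin (MpsiM A i₀ j₀),
      mkLin (MHM A i₀ j₀) + (mkLin (MphiM A i₀ j₀)) ∘ₗ H₁ ∘ₗ (mkLin (MpsiM A i₀ j₀)),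
      hb1, hb2, ?_, ?_, ?_, ?_, ?_, ?_, ?_⟩
    · -- φ chain map
      calc (mkLin (MphiM A i₀ j₀) ∘ₗ Φ) ∘ₗ dbar
          = mkLin (MphiM A i₀ j₀) ∘ₗ (Φ ∘ₗ dbar) := by rw [LinearMap.comp_assoc]
        _ = mkLin (MphiM A i₀ j₀) ∘ₗ (mkLin (MdM A i₀ j₀) ∘ₗ Φ) := by rw [hb3]
        _ = (mkLin (MphiM A i₀ j₀) ∘ₗ mkLin (MdM A i₀ j₀)) ∘ₗ Φ := by
            rw [LinearMap.comp_assoc]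
        _ = (mkLin A ∘ₗ mkLin (MphiM A i₀ j₀)) ∘ₗ Φ := by
            rw [gauss_phi_d hgrade_a hd2a hx0']
        _ = d ∘ₗ (mkLin (MphiM A i₀ j₀) ∘ₗ Φ) := by rw [LinearMap.comp_assoc, ← hda]
    · -- ψ chain map
      calc (Ψ ∘ₗ mkLin (MpsiM A i₀ j₀)) ∘ₗ d
          = Ψ ∘ₗ (mkLin (MpsiM A i₀ j₀) ∘ₗ mkLin A) := by rw [LinearMap.comp_assoc, ← hda]
        _ = Ψ ∘ₗ (mkLin (MdM A i₀ j₀) ∘ₗ mkLin (MpsiM A i₀ j₀)) := by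
            rw [gauss_psi_d hgrade_a hd2a hx0']
        _ = (Ψ ∘ₗ mkLin (MdM A i₀ j₀)) ∘ₗ mkLin (MpsiM A i₀ j₀) := by
            rw [LinearMap.comp_assoc]
        _ = (dbar ∘ₗ Ψ) ∘ₗ mkLin (MpsiM A i₀ j₀) := by rw [hb4]
        _ = dbar ∘ₗ (Ψ ∘ₗ mkLin (MpsiM A i₀ j₀)) := by rw [LinearMap.comp_assoc]
    · -- φ grading
      intro i j h
      have hΦg : ∀ (i : ι₁) (j : Sub2 i₀ j₀), Φ (Pi.single i 1) j ≠ 0 →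
          u ↑j = u₁ i + 0 ∧ f ↑j ≤ f₁ i := by
        intro i j hh
        refine ⟨?_, (hb5 i j hh).2⟩
        rw [add_zero]
        exact (hb5 i j hh).1
      have hφg : ∀ (m : Sub2 i₀ j₀) (j : ι), mkLin (MphiM A i₀ j₀) (Pi.single m 1) j ≠ 0 →
          u j = u ↑m + 0 ∧ f j ≤ f ↑m := by
        intro m j hh
        rw [mkLin_single] at hh
        refine ⟨?_, (gauss_grade_phi hgrade_a hf0 hx0' m j hh).2⟩
        rw [add_zero]
        exact (gauss_grade_phi hgrade_a hf0 hx0' m j hh).1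
      have hc := comp_grade u₁ f₁ (fun m : Sub2 i₀ j₀ => u ↑m) (fun m : Sub2 i₀ j₀ => f ↑m)
        u f 0 0 Φ (mkLin (MphiM A i₀ j₀)) hΦg hφg i j h
      exact ⟨by have := hc.1; omega, hc.2⟩
    · -- ψ grading
      intro i j h
      have hψg : ∀ (m : ι) (n : Sub2 i₀ j₀), mkLin (MpsiM A i₀ j₀) (Pi.single m 1) n ≠ 0 →
          u ↑n = u m + 0 ∧ f ↑n ≤ f m := by
        intro m n hh
        rw [mkLin_single] at hh
        refine ⟨?_, (gauss_grade_psi hgrade_a hf0 hx0' m n hh).2⟩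
        rw [add_zero]
        exact (gauss_grade_psi hgrade_a hf0 hx0' m n hh).1
      have hΨg : ∀ (i : Sub2 i₀ j₀) (j : ι₁), Ψ (Pi.single i 1) j ≠ 0 →
          u₁ j = u ↑i + 0 ∧ f₁ j ≤ f ↑i := by
        intro i j hh
        refine ⟨?_, (hb6 i j hh).2⟩
        rw [add_zero]
        exact (hb6 i j hh).1
      have hc := comp_grade u f (fun m : Sub2 i₀ j₀ => u ↑m) (fun m : Sub2 i₀ j₀ => f ↑m)
        u₁ f₁ 0 0 (mkLin (MpsiM A i₀ j₀)) Ψ hψg hΨg i j h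
      exact ⟨by have := hc.1; omega, hc.2⟩
    · -- H grading
      intro i j h
      rw [LinearMap.add_apply, Pi.add_apply] at h
      by_cases h1 : mkLin (MHM A i₀ j₀) (Pi.single i 1) j ≠ 0
      · rw [mkLin_single] at h1
        exact gauss_grade_H hgrade_a hf0 hx0' i j h1
      · push_neg at h1
        have h2 : (mkLin (MphiM A i₀ j₀) ∘ₗ H₁ ∘ₗ mkLin (MpsiM A i₀ j₀))
            (Pi.single i 1) j ≠ 0 := by
          intro hz
          rw [h1, hz] at h
          exact h (add_zero 0)
        have hψg : ∀ (m : ι) (n : Sub2 i₀ j₀), mkLin (MpsiM A i₀ j₀) (Pi.single m 1) n ≠ 0 →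
            u ↑n = u m + 0 ∧ f ↑n ≤ f m := by
          intro m n hh
          rw [mkLin_single] at hh
          refine ⟨?_, (gauss_grade_psi hgrade_a hf0 hx0' m n hh).2⟩
          rw [add_zero]
          exact (gauss_grade_psi hgrade_a hf0 hx0' m n hh).1
        have hH1g : ∀ (i j : Sub2 i₀ j₀), H₁ (Pi.single i 1) j ≠ 0 →
            u ↑j = u ↑i + 1 ∧ f ↑j ≤ f ↑i := by
          intro i j hh
          exact ⟨(hb7 i j hh).1, (hb7 i j hh).2⟩
        have hφg : ∀ (m : Sub2 i₀ j₀) (j : ι), mkLin (MphiM A i₀ j₀) (Pi.single m 1) j ≠ 0 →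
            u j = u ↑m + 0 ∧ f j ≤ f ↑m := by
          intro m j hh
          rw [mkLin_single] at hh
          refine ⟨?_, (gauss_grade_phi hgrade_a hf0 hx0' m j hh).2⟩
          rw [add_zero]
          exact (gauss_grade_phi hgrade_a hf0 hx0' m j hh).1
        have hin := comp_grade u f (fun m : Sub2 i₀ j₀ => u ↑m) (fun m : Sub2 i₀ j₀ => f ↑m)
          (fun m : Sub2 i₀ j₀ => u ↑m) (fun m : Sub2 i₀ j₀ => f ↑m) 0 1
          (mkLin (MpsiM A i₀ j₀)) H₁ hψg hH1g
        have hc := comp_grade u f (fun m : Sub2 i₀ j₀ => u ↑m) (fun m : Sub2 i₀ j₀ => f ↑m)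
          u f (0 + 1) 0
          (H₁ ∘ₗ mkLin (MpsiM A i₀ j₀)) (mkLin (MphiM A i₀ j₀))
          hin hφg i j (by rwa [← LinearMap.comp_assoc] at h2)
        exact ⟨by have := hc.1; omega, hc.2⟩
    · -- ψ ∘ φ = id
      calc (Ψ ∘ₗ mkLin (MpsiM A i₀ j₀)) ∘ₗ (mkLin (MphiM A i₀ j₀) ∘ₗ Φ)
          = Ψ ∘ₗ ((mkLin (MpsiM A i₀ j₀) ∘ₗ mkLin (MphiM A i₀ j₀)) ∘ₗ Φ) := by
            rw [LinearMap.comp_assoc, LinearMap.comp_assoc]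
        _ = Ψ ∘ₗ Φ := by rw [gauss_psi_phi hgrade_a hx0', LinearMap.id_comp]
        _ = LinearMap.id := hb8
    · -- homotopy equation
      rw [show (mkLin (MphiM A i₀ j₀) ∘ₗ Φ) ∘ₗ (Ψ ∘ₗ mkLin (MpsiM A i₀ j₀)) - LinearMap.id
          = d ∘ₗ (mkLin (MHM A i₀ j₀) + mkLin (MphiM A i₀ j₀) ∘ₗ H₁ ∘ₗ mkLin (MpsiM A i₀ j₀))
            + (mkLin (MHM A i₀ j₀) + mkLin (MphiM A i₀ j₀) ∘ₗ H₁ ∘ₗ mkLin (MpsiM A i₀ j₀)) ∘ₗ d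
          from ?_]
      exact comp_reduction_homotopy d (mkLin (MdM A i₀ j₀))
        (mkLin (MphiM A i₀ j₀)) (mkLin (MpsiM A i₀ j₀)) (mkLin (MHM A i₀ j₀)) Φ Ψ H₁
        (by rw [hda]; exact gauss_phi_d hgrade_a hd2a hx0')
        (by rw [hda]; exact gauss_psi_d hgrade_a hd2a hx0')
        (by rw [hda]; exact gauss_homotopy hgrade_a hd2a hx0')
        hb9

end reducemain

section counting

variable {k : Type v} [Field k]
variable {ι : Type w} [Fintype ι] [DecidableEq ι]
variable {ι₁ : Type u_c} [Fintype ι₁] [DecidableEq ι₁]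

lemma count_eq
    (u f : ι → ℤ) (u₁ f₁ : ι₁ → ℤ)
    (d D0 : (ι → k) →ₗ[k] (ι → k))
    (hgrade : ∀ i j, d (Pi.single i 1) j ≠ 0 → u j = u i - 1 ∧ f j ≤ f i)
    (hD0 : ∀ i j, D0 (Pi.single i 1) j = if f j = f i then d (Pi.single i 1) j else 0)
    (dbar : (ι₁ → k) →ₗ[k] (ι₁ → k))
    (φ : (ι₁ → k) →ₗ[k] (ι → k)) (ψ : (ι → k) →ₗ[k] (ι₁ → k))
    (H : (ι → k) →ₗ[k] (ι → k))
    (hb1 : ∀ i j, dbar (Pi.single i 1) j ≠ 0 → u₁ j = u₁ i - 1 ∧ f₁ j ≤ f₁ i - 1)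
    (hb3 : φ ∘ₗ dbar = d ∘ₗ φ)
    (hb4 : ψ ∘ₗ d = dbar ∘ₗ ψ)
    (hb5 : ∀ i j, φ (Pi.single i 1) j ≠ 0 → u j = u₁ i ∧ f j ≤ f₁ i)
    (hb6 : ∀ i j, ψ (Pi.single i 1) j ≠ 0 → u₁ j = u i ∧ f₁ j ≤ f i)
    (hb7 : ∀ i j, H (Pi.single i 1) j ≠ 0 → u j = u i + 1 ∧ f j ≤ f i)
    (hb8 : ψ ∘ₗ φ = LinearMap.id)
    (hb9 : φ ∘ₗ ψ - LinearMap.id = d ∘ₗ H + H ∘ₗ d)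
    (n j : ℤ) :
    Module.finrank k (bidegPiece k u₁ f₁ n j)
      = Module.finrank k (bidegHomology k u f D0 n j) := by
  classical
  -- entry-grading hypotheses in `+ shift` form
  have hd' : ∀ i m, d (Pi.single i 1) m ≠ 0 → u m = u i + (-1) ∧ f m ≤ f i :=
    fun i m h => ⟨by have := (hgrade i m h).1; omega, (hgrade i m h).2⟩
  have hφ' : ∀ i m, φ (Pi.single i 1) m ≠ 0 → u m = u₁ i + 0 ∧ f m ≤ f₁ i :=
    fun i m h => ⟨by have := (hb5 i m h).1; omega, (hb5 i m h).2⟩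
  have hψ' : ∀ i m, ψ (Pi.single i 1) m ≠ 0 → u₁ m = u i + 0 ∧ f₁ m ≤ f i :=
    fun i m h => ⟨by have := (hb6 i m h).1; omega, (hb6 i m h).2⟩
  have hH' : ∀ i m, H (Pi.single i 1) m ≠ 0 → u m = u i + 1 ∧ f m ≤ f i := hb7
  have hdbar' : ∀ i m, dbar (Pi.single i 1) m ≠ 0 → u₁ m = u₁ i + (-1) ∧ f₁ m ≤ f₁ i :=
    fun i m h => ⟨by have := (hb1 i m h).1; omega, by have := (hb1 i m h).2; omega⟩
  -- D0 is the degree-(-1,0) truncation of d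
  have hD0eq : D0 = trunc u f u f (-1) d := by
    apply lin_ext; intro i; funext m
    rw [trunc_entry, hD0 i m]
    by_cases hf : f m = f i
    · by_cases hu : u m = u i + (-1)
      · rw [if_pos hf, if_pos ⟨hu, hf⟩]
      · rw [if_pos hf, if_neg (fun hc => hu hc.1)]
        by_contra hc
        have := (hgrade i m hc).1
        omega
    · rw [if_neg hf, if_neg (fun hc => hf hc.2)]
  set φ₀ := trunc u₁ f₁ u f 0 φ with hφ₀
  set ψ₀ := trunc u f u₁ f₁ 0 ψ with hψ₀
  set H₀ := trunc u f u f 1 H with hH₀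
  have hz1 : (0 : ℤ) + -1 = -1 := by norm_num
  have hz2 : (-1 : ℤ) + 0 = -1 := by norm_num
  have hz3 : (0 : ℤ) + 0 = 0 := by norm_num
  have hz4 : (1 : ℤ) + -1 = 0 := by norm_num
  have hz5 : (-1 : ℤ) + 1 = 0 := by norm_num
  have hdbar0 : trunc u₁ f₁ u₁ f₁ (-1) dbar = 0 :=
    trunc_eq_zero _ _ _ _ _ dbar (fun i m h => (hb1 i m h).2)
  -- D0 ∘ φ₀ = 0
  have e1 := trunc_comp u₁ f₁ u f u f 0 (-1) φ d hφ' hd'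
  rw [hz1] at e1
  have e2 := trunc_comp u₁ f₁ u₁ f₁ u f (-1) 0 dbar φ hdbar' hφ'
  rw [hz2] at e2
  have hD0φ : D0 ∘ₗ φ₀ = 0 := by
    rw [hD0eq, ← e1, ← hb3, e2, hdbar0]
    exact LinearMap.comp_zero _
  -- ψ₀ ∘ D0 = 0
  have e3 := trunc_comp u f u f u₁ f₁ (-1) 0 d ψ hd' hψ'
  rw [hz2] at e3
  have e4 := trunc_comp u f u₁ f₁ u₁ f₁ 0 (-1) ψ dbar hψ' hdbar'
  rw [hz1] at e4
  have hψD0 : ψ₀ ∘ₗ D0 = 0 := by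
    rw [hD0eq, ← e3, hb4, e4, hdbar0]
    exact LinearMap.zero_comp _
  -- ψ₀ ∘ φ₀ = id
  have e5 := trunc_comp u₁ f₁ u f u₁ f₁ 0 0 φ ψ hφ' hψ'
  rw [hz3] at e5
  have hψφ : ψ₀ ∘ₗ φ₀ = LinearMap.id := by
    rw [← e5, hb8, trunc_id]
  -- φ₀ ∘ ψ₀ - id = D0 ∘ H₀ + H₀ ∘ D0
  have e6 := trunc_comp u f u₁ f₁ u f 0 0 ψ φ hψ' hφ'
  rw [hz3] at e6
  have e7 := trunc_comp u f u f u f 1 (-1) H d hH' hd'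
  rw [hz4] at e7
  have e8 := trunc_comp u f u f u f (-1) 1 d H hd' hH'
  rw [hz5] at e8
  have hhom : φ₀ ∘ₗ ψ₀ - LinearMap.id = D0 ∘ₗ H₀ + H₀ ∘ₗ D0 := by
    have := congrArg (trunc u f u f 0) hb9
    rw [trunc_sub, trunc_add, trunc_id, e6, e7, e8] at this
    rw [hD0eq]
    exact this
  -- the homology submodules
  set S : Submodule k (ι → k) := LinearMap.ker D0 ⊓ bidegPiece k u f n j with hS
  set T : Submodule k ↥S :=
    (Submodule.map D0 (bidegPiece k u f (n + 1) j)).comap S.subtype with hT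
  -- φ₀ maps P₁ into S
  have hφ₀mem : ∀ x : ι₁ → k, x ∈ bidegPiece k u₁ f₁ n j → φ₀ x ∈ S := by
    intro x hx
    refine Submodule.mem_inf.mpr ⟨?_, ?_⟩
    · rw [LinearMap.mem_ker]
      exact LinearMap.congr_fun hD0φ x
    · have := piece_map u₁ f₁ u f 0 φ₀ (trunc_grade _ _ _ _ _ φ) n j x hx
      rwa [add_zero] at this
  have hψ₀mem : ∀ x : ι → k, x ∈ bidegPiece k u f n j → ψ₀ x ∈ bidegPiece k u₁ f₁ n j := by
    intro x hx
    have := piece_map u f u₁ f₁ 0 ψ₀ (trunc_grade _ _ _ _ _ ψ) n j x hx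
    rwa [add_zero] at this
  -- linear maps between P₁ and S⧸T
  set P₁ := bidegPiece k u₁ f₁ n j with hP₁
  let φS : P₁ →ₗ[k] S :=
    LinearMap.codRestrict S (φ₀ ∘ₗ P₁.subtype) (fun x => hφ₀mem x.1 x.2)
  let α : P₁ →ₗ[k] (↥S ⧸ T) := T.mkQ ∘ₗ φS
  let ψP : ↥S →ₗ[k] P₁ :=
    LinearMap.codRestrict P₁ (ψ₀ ∘ₗ S.subtype)
      (fun x => hψ₀mem x.1 (Submodule.mem_inf.mp x.2).2)
  have hTker : T ≤ LinearMap.ker ψP := by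
    intro x hx
    rw [LinearMap.mem_ker]
    obtain ⟨y, hy, hyx⟩ := hx
    apply Subtype.ext
    show ψ₀ (S.subtype x) = 0
    rw [← hyx]
    exact LinearMap.congr_fun hψD0 y
  let β : (↥S ⧸ T) →ₗ[k] P₁ := Submodule.liftQ T ψP hTker
  have hβα : ∀ x : P₁, β (α x) = x := by
    intro x
    apply Subtype.ext
    show ψ₀ (φ₀ x.1) = x.1
    exact LinearMap.congr_fun hψφ x.1
  have hαβ : ∀ z : (↥S ⧸ T), α (β z) = z := by
    intro z
    obtain ⟨x, rfl⟩ := Submodule.Quotient.mk_surjective T z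
    rw [show (Submodule.Quotient.mk x : ↥S ⧸ T) = T.mkQ x from rfl]
    show T.mkQ (φS (β (T.mkQ x))) = T.mkQ x
    rw [← sub_eq_zero, ← map_sub, ← LinearMap.mem_ker, Submodule.ker_mkQ]
    show (φS (β (T.mkQ x)) - x : ↥S).1 ∈ Submodule.map D0 (bidegPiece k u f (n + 1) j)
    have hval : (φS (β (T.mkQ x)) - x : ↥S).1 = φ₀ (ψ₀ x.1) - x.1 := rfl
    rw [hval]
    have hx1 : φ₀ (ψ₀ x.1) - x.1 = D0 (H₀ x.1) + H₀ (D0 x.1) := by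
      have := LinearMap.congr_fun hhom x.1
      simpa using this
    have hker : D0 x.1 = 0 := (Submodule.mem_inf.mp x.2).1
    rw [hx1, hker, map_zero, add_zero]
    refine ⟨H₀ x.1, ?_, rfl⟩
    have hp : x.1 ∈ bidegPiece k u f n j := (Submodule.mem_inf.mp x.2).2
    exact piece_map u f u f 1 H₀ (trunc_grade _ _ _ _ _ H) n j x.1 hp
  have equiv : P₁ ≃ₗ[k] (↥S ⧸ T) :=
    LinearEquiv.ofLinear α β (LinearMap.ext hαβ) (LinearMap.ext hβα)
  exact equiv.finrank_eq

end counting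


theorem filtered_homotopy_equivalence_with_E1
    {k : Type*} [Field k] {ι : Type*} [Fintype ι] [DecidableEq ι]
    (u f : ι → ℤ)
    (d D0 : (ι → k) →ₗ[k] (ι → k))
    (hgrade : ∀ i j, d (Pi.single i 1) j ≠ 0 → u j = u i - 1 ∧ f j ≤ f i)
    (hd2 : d ∘ₗ d = 0)
    (hD0 : ∀ i j, D0 (Pi.single i 1) j = if f j = f i then d (Pi.single i 1) j else 0) :
    ∃ (ι₁ : Type) (_ : Fintype ι₁) (_ : DecidableEq ι₁) (u₁ f₁ : ι₁ → ℤ)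
      (dbar : (ι₁ → k) →ₗ[k] (ι₁ → k))
      (φ : (ι₁ → k) →ₗ[k] (ι → k)) (ψ : (ι → k) →ₗ[k] (ι₁ → k))
      (H : (ι → k) →ₗ[k] (ι → k)) (H' : (ι₁ → k) →ₗ[k] (ι₁ → k)),
      -- d̄ decreases the homological grading by 1 and strictly decreases the filtration
      (∀ i j, dbar (Pi.single i 1) j ≠ 0 → u₁ j = u₁ i - 1 ∧ f₁ j ≤ f₁ i - 1) ∧
      -- (C₁, d̄) is a complex
      dbar ∘ₗ dbar = 0 ∧
      -- the underlying bigraded vector space of C₁ is H(C, d₀)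
      (∀ n j : ℤ, Nat.card {i : ι₁ // u₁ i = n ∧ f₁ i = j} =
        Module.finrank k (bidegHomology k u f D0 n j)) ∧
      -- φ and ψ are chain maps
      φ ∘ₗ dbar = d ∘ₗ φ ∧
      ψ ∘ₗ d = dbar ∘ₗ ψ ∧
      -- φ and ψ preserve the homological grading and do not increase the filtration
      (∀ i j, φ (Pi.single i 1) j ≠ 0 → u j = u₁ i ∧ f j ≤ f₁ i) ∧
      (∀ i j, ψ (Pi.single i 1) j ≠ 0 → u₁ j = u i ∧ f₁ j ≤ f i) ∧
      -- the homotopies raise the homological grading by 1 and do not increase the filtration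
      (∀ i j, H (Pi.single i 1) j ≠ 0 → u j = u i + 1 ∧ f j ≤ f i) ∧
      (∀ i j, H' (Pi.single i 1) j ≠ 0 → u₁ j = u₁ i + 1 ∧ f₁ j ≤ f₁ i) ∧
      -- homotopy equations
      ψ ∘ₗ φ - LinearMap.id = dbar ∘ₗ H' + H' ∘ₗ dbar ∧
      φ ∘ₗ ψ - LinearMap.id = d ∘ₗ H + H ∘ₗ d := by
  classical
  obtain ⟨ι₁, iF, iD, u₁, f₁, dbar, φ, ψ, Hh, hb1, hb2, hb3, hb4, hb5, hb6, hb7, hb8, hb9⟩ :=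
    @reduce k _ (Fintype.card ι) ι _ _ u f d le_rfl hgrade hd2
  have hcount : ∀ n j : ℤ, Nat.card {i : ι₁ // u₁ i = n ∧ f₁ i = j}
      = Module.finrank k (bidegHomology k u f D0 n j) := by
    intro n j
    rw [← finrank_piece (k := k) u₁ f₁ n j]
    exact count_eq u f u₁ f₁ d D0 hgrade hD0 dbar φ ψ Hh hb1 hb3 hb4 hb5 hb6 hb7 hb8 hb9 n j
  set m := Fintype.card ι₁ with hm
  set e : ι₁ ≃ Fin m := Fintype.equivFin ι₁ with he
  set E : (ι₁ → k) ≃ₗ[k] (Fin m → k) := (LinearEquiv.funCongrLeft k k e).symm with hE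
  have hEapp : ∀ (v : ι₁ → k) (b : Fin m), E v b = v (e.symm b) := by
    intro v b
    simp [hE, LinearEquiv.funCongrLeft]
  have hEsapp : ∀ (w : Fin m → k) (i : ι₁), E.symm w i = w (e i) := by
    intro w i
    simp [hE, LinearEquiv.funCongrLeft]
  have hEs : ∀ a : Fin m, E.symm (Pi.single a 1) = Pi.single (e.symm a) 1 := by
    intro a
    funext i
    rw [hEsapp]
    simp [Pi.single_apply, Equiv.eq_symm_apply, eq_comm]
  refine ⟨Fin m, inferInstance, inferInstance, u₁ ∘ e.symm, f₁ ∘ e.symm,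
    E.toLinearMap ∘ₗ dbar ∘ₗ E.symm.toLinearMap,
    φ ∘ₗ E.symm.toLinearMap, E.toLinearMap ∘ₗ ψ, Hh, 0,
    ?_, ?_, ?_, ?_, ?_, ?_, ?_, hb7, ?_, ?_, ?_⟩
  · -- dbar grading
    intro a b h
    have h' : dbar (Pi.single (e.symm a) 1) (e.symm b) ≠ 0 := by
      intro hz
      apply h
      rw [LinearMap.comp_apply, LinearMap.comp_apply, LinearEquiv.coe_coe,
        LinearEquiv.coe_coe, hEs, hEapp, hz]
    exact hb1 _ _ h'
  · -- dbar² = 0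
    apply LinearMap.ext
    intro v
    have hdd := LinearMap.congr_fun hb2 (E.symm v)
    simp only [LinearMap.comp_apply, LinearEquiv.coe_coe, LinearMap.zero_apply] at hdd ⊢
    rw [LinearEquiv.symm_apply_apply, hdd, map_zero]
  · -- count
    intro n j
    exact (Nat.card_congr (Equiv.subtypeEquiv e.symm (fun a => Iff.rfl))).trans (hcount n j)
  · -- φ chain map
    apply LinearMap.ext
    intro v
    have hc := LinearMap.congr_fun hb3 (E.symm v)
    simp only [LinearMap.comp_apply, LinearEquiv.coe_coe] at hc ⊢
    rw [LinearEquiv.symm_apply_apply]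
    exact hc
  · -- ψ chain map
    apply LinearMap.ext
    intro v
    have hc := LinearMap.congr_fun hb4 v
    simp only [LinearMap.comp_apply, LinearEquiv.coe_coe] at hc ⊢
    rw [LinearEquiv.symm_apply_apply, hc]
  · -- φ grading
    intro a b h
    have h' : φ (Pi.single (e.symm a) 1) b ≠ 0 := by
      intro hz
      apply h
      rw [LinearMap.comp_apply, LinearEquiv.coe_coe, hEs, hz]
    exact hb5 _ _ h'
  · -- ψ grading
    intro i b h
    have h' : ψ (Pi.single i 1) (e.symm b) ≠ 0 := by
      intro hz
      apply h
      rw [LinearMap.comp_apply, LinearEquiv.coe_coe, hEapp, hz]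
    exact hb6 _ _ h'
  · -- H' grading (H' = 0)
    intro i j h
    simp at h
  · -- ψ ∘ φ - id = 0
    have hcomp : (E.toLinearMap ∘ₗ ψ) ∘ₗ (φ ∘ₗ E.symm.toLinearMap) = LinearMap.id := by
      apply LinearMap.ext
      intro v
      have hc := LinearMap.congr_fun hb8 (E.symm v)
      simp only [LinearMap.comp_apply, LinearEquiv.coe_coe, LinearMap.id_apply] at hc ⊢
      rw [hc, LinearEquiv.apply_symm_apply]
    rw [hcomp]
    simp
  · -- φ ∘ ψ - id = dH + Hd
    have hcomp : (φ ∘ₗ E.symm.toLinearMap) ∘ₗ (E.toLinearMap ∘ₗ ψ) = φ ∘ₗ ψ := by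
      apply LinearMap.ext
      intro v
      simp only [LinearMap.comp_apply, LinearEquiv.coe_coe]
      rw [LinearEquiv.symm_apply_apply]
    rw [hcomp]
    exact hb9
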